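/- There exists an absolute constant C > 0 with the following property. For every natural number n ≥ 2, every probability vector p on Fin n, and all natural numbers 1 ≤ t₁ ≤ t₂: under the product measure μ_p^{t₁} ⊗ μ_p^{t₂} on pairs (ω, ω′) ∈ (Fin t₁ → Fin n) × (Fin t₂ → Fin n), the probability that for every i ∈ Fin n the occurrence counts X i = card {s | ω s = i} and Y i = card {s | ω′ s = i} satisfy (X i : ℝ) ≤ C · Real.log n · max 1 ((t₁ / t₂) · Y i) is at least 9/10. -/

import Mathlib

open MeasureTheory

/-- The PMF on `Fin n` induced by a probability vector `p : Fin n → ℝ`. -/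
noncomputable def pmfOfVec {n : ℕ} (p : Fin n → ℝ) (hp0 : ∀ i, 0 ≤ p i)
    (hp1 : ∑ i, p i = 1) : PMF (Fin n) :=
  PMF.ofFintype (fun i => ENNReal.ofReal (p i))
    (by
      rw [← ENNReal.ofReal_sum_of_nonneg (fun i _ => hp0 i), hp1, ENNReal.ofReal_one])

open MeasureTheory Finset Real
open scoped ENNReal
open MeasureTheory Finset

variable {n t : ℕ} (κ : Measure (Fin n)) [IsProbabilityMeasure κ]

lemma prodset_meas (i : Fin n) (S : Finset (Fin t)) :
    Measure.pi (fun _ : Fin t => κ) {ω : Fin t → Fin n | ∀ s ∈ S, ω s = i}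
      = κ {i} ^ S.card := by
  have h : {ω : Fin t → Fin n | ∀ s ∈ S, ω s = i}
      = Set.pi Set.univ (fun s => if s ∈ S then {i} else Set.univ) := by
    ext ω
    simp only [Set.mem_setOf_eq, Set.mem_pi, Set.mem_univ, true_implies]
    constructor
    · intro h s; split <;> simp_all
    · intro h s hs; have := h s; simp [hs] at this; exact this
  rw [h, Measure.pi_pi]
  rw [show (fun s => κ (if s ∈ S then ({i} : Set (Fin n)) else Set.univ))
      = fun s => if s ∈ S then κ {i} else 1 by
    funext s; split <;> simp [measure_univ]]
  rw [Finset.prod_ite_mem, Finset.univ_inter, Finset.prod_const]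

lemma tail_upper (i : Fin n) (k : ℕ) :
    Measure.pi (fun _ : Fin t => κ)
      {ω : Fin t → Fin n | k ≤ (Finset.univ.filter fun s => ω s = i).card}
      ≤ (t.choose k) * κ {i} ^ k := by
  have hsub : {ω : Fin t → Fin n | k ≤ (Finset.univ.filter fun s => ω s = i).card}
      ⊆ ⋃ S ∈ Finset.powersetCard k (Finset.univ : Finset (Fin t)),
          {ω : Fin t → Fin n | ∀ s ∈ S, ω s = i} := by
    intro ω hω
    obtain ⟨S, hS, hcard⟩ := Finset.exists_subset_card_eq hω
    have hmem : S ∈ Finset.powersetCard k (Finset.univ : Finset (Fin t)) :=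
      Finset.mem_powersetCard.mpr ⟨Finset.subset_univ _, hcard⟩
    exact Set.mem_biUnion hmem (fun s hs => by simpa using hS hs)
  calc Measure.pi (fun _ : Fin t => κ) _
      ≤ ∑ S ∈ Finset.powersetCard k (Finset.univ : Finset (Fin t)),
          Measure.pi (fun _ : Fin t => κ) {ω : Fin t → Fin n | ∀ s ∈ S, ω s = i} :=
        (measure_mono hsub).trans (measure_biUnion_finset_le _ _)
    _ = ∑ S ∈ Finset.powersetCard k (Finset.univ : Finset (Fin t)), κ {i} ^ k := by
        refine Finset.sum_congr rfl fun S hS => ?_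
        rw [prodset_meas κ i S, (Finset.mem_powersetCard.mp hS).2]
    _ = (t.choose k) * κ {i} ^ k := by
        rw [Finset.sum_const, Finset.card_powersetCard, Finset.card_univ,
          Fintype.card_fin, nsmul_eq_mul]
open MeasureTheory Finset

variable {n t : ℕ} (κ : Measure (Fin n)) [IsProbabilityMeasure κ]

lemma exactset_meas (i : Fin n) (S : Finset (Fin t)) :
    Measure.pi (fun _ : Fin t => κ)
      {ω : Fin t → Fin n | Finset.univ.filter (fun s => ω s = i) = S}
      = κ {i} ^ S.card * (1 - κ {i}) ^ (t - S.card) := by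
  have h : {ω : Fin t → Fin n | Finset.univ.filter (fun s => ω s = i) = S}
      = Set.pi Set.univ (fun s => if s ∈ S then {i} else ({i}ᶜ : Set (Fin n))) := by
    ext ω
    simp only [Set.mem_setOf_eq, Set.mem_pi, Set.mem_univ, true_implies, Finset.ext_iff,
      Finset.mem_filter, Finset.mem_univ, true_and]
    constructor
    · intro h s; have := h s; split <;> simp_all
    · intro h s; have := h s; constructor
      · intro hsi; by_contra hS; simp [hS] at this; exact this hsi
      · intro hS; simpa [hS] using this
  have hcompl : κ ({i}ᶜ : Set (Fin n)) = 1 - κ {i} :=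
    prob_compl_eq_one_sub (measurableSet_singleton i)
  rw [h, Measure.pi_pi]
  rw [show (fun s => κ (if s ∈ S then ({i} : Set (Fin n)) else ({i}ᶜ)))
      = fun s => if s ∈ S then κ {i} else (1 - κ {i}) by
    funext s; split <;> simp [hcompl]]
  rw [Finset.prod_ite, Finset.prod_const, Finset.prod_const,
    Finset.filter_mem_eq_inter, Finset.univ_inter]
  congr 2
  rw [show (Finset.univ.filter fun s => s ∉ S) = Sᶜ by ext s; simp [Finset.mem_compl],
      Finset.card_compl, Fintype.card_fin]

lemma tail_lower (i : Fin n) (m : ℕ) :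
    Measure.pi (fun _ : Fin t => κ)
      {ω : Fin t → Fin n | (Finset.univ.filter fun s => ω s = i).card ≤ m}
      ≤ ∑ j ∈ Finset.range (m + 1), (t.choose j) * κ {i} ^ j * (1 - κ {i}) ^ (t - j) := by
  have hsub : {ω : Fin t → Fin n | (Finset.univ.filter fun s => ω s = i).card ≤ m}
      ⊆ ⋃ S ∈ Finset.univ.powerset.filter (fun S : Finset (Fin t) => S.card ≤ m),
          {ω : Fin t → Fin n | Finset.univ.filter (fun s => ω s = i) = S} := by
    intro ω hω
    have hmem : (Finset.univ.filter fun s => ω s = i)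
        ∈ Finset.univ.powerset.filter (fun S : Finset (Fin t) => S.card ≤ m) := by
      simp only [Finset.mem_filter, Finset.mem_powerset]
      exact ⟨Finset.subset_univ _, hω⟩
    exact Set.mem_biUnion hmem rfl
  calc Measure.pi (fun _ : Fin t => κ) _
      ≤ ∑ S ∈ Finset.univ.powerset.filter (fun S : Finset (Fin t) => S.card ≤ m),
          Measure.pi (fun _ : Fin t => κ)
            {ω : Fin t → Fin n | Finset.univ.filter (fun s => ω s = i) = S} :=
        (measure_mono hsub).trans (measure_biUnion_finset_le _ _)
    _ = ∑ S ∈ Finset.univ.powerset.filter (fun S : Finset (Fin t) => S.card ≤ m),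
          κ {i} ^ S.card * (1 - κ {i}) ^ (t - S.card) := by
        exact Finset.sum_congr rfl fun S _ => exactset_meas κ i S
    _ = ∑ j ∈ Finset.range (m + 1), (t.choose j) * κ {i} ^ j * (1 - κ {i}) ^ (t - j) := by
        have hset : Finset.univ.powerset.filter (fun S : Finset (Fin t) => S.card ≤ m)
            = (Finset.range (m+1)).biUnion (fun j => Finset.powersetCard j Finset.univ) := by
          ext S
          simp [Finset.mem_powersetCard, Nat.lt_succ_iff, eq_comm]
        rw [hset, Finset.sum_biUnion]
        · refine Finset.sum_congr rfl fun j _ => ?_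
          rw [Finset.sum_congr rfl (fun S hS => by
            rw [(Finset.mem_powersetCard.mp hS).2]),
            Finset.sum_const, Finset.card_powersetCard, Finset.card_univ, Fintype.card_fin,
            nsmul_eq_mul, mul_assoc]
        · intro a _ b _ hab
          simp only [Function.onFun, Finset.disjoint_left]
          intro S hSa hSb
          exact hab ((Finset.mem_powersetCard.mp hSa).2.symm.trans
            (Finset.mem_powersetCard.mp hSb).2)
open Real Finset

lemma log8 : (2:ℝ) ≤ Real.log 8 := by
  have h2 : (0.6931471803 : ℝ) < Real.log 2 := Real.log_two_gt_d9
  have : Real.log 8 = 3 * Real.log 2 := by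
    rw [show (8:ℝ) = 2^(3:ℕ) by norm_num, Real.log_pow]; push_cast; ring
  nlinarith

lemma log4 : (1.38:ℝ) ≤ Real.log 4 := by
  have h2 : (0.6931471803 : ℝ) < Real.log 2 := Real.log_two_gt_d9
  have : Real.log 4 = 2 * Real.log 2 := by
    rw [show (4:ℝ) = 2^(2:ℕ) by norm_num, Real.log_pow]; push_cast; ring
  nlinarith

lemma logtwo : (0.693:ℝ) ≤ Real.log 2 := by
  have h2 : (0.6931471803 : ℝ) < Real.log 2 := Real.log_two_gt_d9
  linarith

-- generic: choose * q^k ≤ (t*q)^k / k!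
lemma choose_mul_pow_le {t k : ℕ} {q : ℝ} (hq : 0 ≤ q) :
    (t.choose k : ℝ) * q ^ k ≤ ((t:ℝ) * q) ^ k / (k.factorial : ℝ) := by
  rw [mul_pow, mul_comm ((t:ℝ)^k) (q^k), mul_div_assoc]
  rw [mul_comm ((t.choose k : ℝ)) (q^k)]
  gcongr
  exact Nat.choose_le_pow_div k t

lemma pow_div_fact_le {x c : ℝ} (hx : 0 ≤ x) (hc : 0 < c) (k : ℕ) :
    x ^ k / (k.factorial : ℝ) ≤ Real.exp (c * x) / c ^ k := by
  have h := Real.pow_div_factorial_le_exp (x := c * x) (by positivity) k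
  rw [mul_pow] at h
  rw [div_le_div_iff₀ (by positivity) (by positivity)]
  calc x ^ k * c ^ k = c ^ k * x ^ k * (k.factorial : ℝ) / (k.factorial : ℝ) := by
        field_simp
    _ ≤ Real.exp (c * x) * (k.factorial : ℝ) := by
        rw [div_le_iff₀ (by positivity)]
        have hf : (0:ℝ) < (k.factorial : ℝ) := by
          exact_mod_cast Nat.factorial_pos k
        rw [div_le_iff₀ hf] at h
        nlinarith

lemma pow_eq_exp {c : ℝ} (hc : 0 < c) (k : ℕ) : c ^ k = Real.exp ((k:ℕ) * Real.log c) := by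
  rw [← Real.log_pow, Real.exp_log (by positivity)]

-- Case A bound
lemma caseA {t₁ : ℕ} {q L : ℝ} (hq : 0 ≤ q) (hL : 0.693 ≤ L)
    (hcase : (t₁:ℝ) * q ≤ 18 * L) :
    (t₁.choose ⌈(80:ℝ) * L⌉₊ : ℝ) * q ^ (⌈(80:ℝ) * L⌉₊) ≤ Real.exp (-6 * L) := by
  set k := ⌈(80:ℝ) * L⌉₊
  have hLpos : (0:ℝ) < L := by linarith
  have h1 : (t₁.choose k : ℝ) * q ^ k ≤ ((t₁:ℝ)*q) ^ k / (k.factorial : ℝ) :=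
    choose_mul_pow_le hq
  have h2 : ((t₁:ℝ)*q) ^ k / (k.factorial : ℝ) ≤ (18*L) ^ k / (k.factorial : ℝ) := by
    gcongr
  have h3 : (18*L) ^ k / (k.factorial : ℝ) ≤ Real.exp (8 * (18*L)) / 8 ^ k :=
    pow_div_fact_le (by positivity) (by norm_num) k
  have h4 : Real.exp (8 * (18*L)) / 8 ^ k ≤ Real.exp (-6 * L) := by
    rw [pow_eq_exp (by norm_num : (0:ℝ) < 8), div_le_iff₀ (by positivity), ← Real.exp_add]
    rw [Real.exp_le_exp]
    have hk : (80:ℝ) * L ≤ (k:ℝ) := Nat.le_ceil _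
    have := log8
    nlinarith
  linarith

-- Case B upper bound
lemma caseB1 {t₁ : ℕ} {q L : ℝ} (hq : 0 ≤ q) (hL : 0.693 ≤ L)
    (hcase : 18 * L < (t₁:ℝ) * q) :
    (t₁.choose ⌈(8:ℝ) * ((t₁:ℝ)*q)⌉₊ : ℝ) * q ^ (⌈(8:ℝ) * ((t₁:ℝ)*q)⌉₊)
      ≤ Real.exp (-6 * L) := by
  set x := (t₁:ℝ) * q with hxdef
  have hx : 0 ≤ x := by positivity
  set k := ⌈(8:ℝ) * x⌉₊
  have h1 : (t₁.choose k : ℝ) * q ^ k ≤ x ^ k / (k.factorial : ℝ) := choose_mul_pow_le hq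
  have h3 : x ^ k / (k.factorial : ℝ) ≤ Real.exp (4 * x) / 4 ^ k :=
    pow_div_fact_le hx (by norm_num) k
  have h4 : Real.exp (4 * x) / 4 ^ k ≤ Real.exp (-6 * L) := by
    rw [pow_eq_exp (by norm_num : (0:ℝ) < 4), div_le_iff₀ (by positivity), ← Real.exp_add]
    rw [Real.exp_le_exp]
    have hk : (8:ℝ) * x ≤ (k:ℝ) := Nat.le_ceil _
    have := log4
    have hkpos : (0:ℝ) ≤ (k:ℝ) := Nat.cast_nonneg _
    have hlogk : (8:ℝ) * x * 1.38 ≤ (k:ℝ) * Real.log 4 := by nlinarith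
    nlinarith
  linarith

lemma pow_div_fact_mono {x : ℝ} {j m : ℕ} (hx : 0 ≤ x) (hj : j ≤ m) (hmx : (m:ℝ) ≤ x) :
    x ^ j / (j.factorial : ℝ) ≤ x ^ m / (m.factorial : ℝ) := by
  have hd : j.factorial * m.descFactorial (m - j) = m.factorial := by
    have := Nat.factorial_mul_descFactorial (Nat.sub_le m j)
    rwa [Nat.sub_sub_self hj] at this
  have hdle : (m.descFactorial (m - j) : ℝ) ≤ x ^ (m - j) := by
    calc (m.descFactorial (m - j) : ℝ) ≤ (m : ℝ) ^ (m - j) := by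
          exact_mod_cast Nat.descFactorial_le_pow m (m - j)
      _ ≤ x ^ (m - j) := pow_le_pow_left₀ (Nat.cast_nonneg m) hmx _
  have hjf : (0:ℝ) < (j.factorial : ℝ) := by exact_mod_cast Nat.factorial_pos j
  have hmf : (0:ℝ) < (m.factorial : ℝ) := by exact_mod_cast Nat.factorial_pos m
  rw [div_le_div_iff₀ hjf hmf]
  calc x ^ j * (m.factorial : ℝ) = x ^ j * ((m.descFactorial (m-j) : ℝ) * (j.factorial : ℝ)) := by
        rw [← hd]; push_cast; ring
    _ ≤ x ^ j * (x ^ (m - j) * (j.factorial : ℝ)) := by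
        have hxj : (0:ℝ) ≤ x ^ j := pow_nonneg hx j
        gcongr
    _ = x ^ m * (j.factorial : ℝ) := by
        rw [← mul_assoc, ← pow_add, Nat.add_sub_cancel' hj]

lemma caseB2 {t₂ : ℕ} {q L : ℝ} (hq0 : 0 ≤ q) (hq1 : q ≤ 1) (hL : 0.693 ≤ L)
    (hcase : 18 * L < (t₂:ℝ) * q) :
    ∑ j ∈ range (⌊(t₂:ℝ)*q/20⌋₊ + 1), (t₂.choose j : ℝ) * q ^ j * (1-q) ^ (t₂ - j)
      ≤ Real.exp (-6 * L) := by
  set x := (t₂:ℝ) * q with hxdef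
  have hx : 0 ≤ x := by positivity
  set m := ⌊x/20⌋₊ with hmdef
  have hm20 : (m:ℝ) ≤ x / 20 := Nat.floor_le (by positivity)
  have hmx : (m:ℝ) ≤ x := by linarith
  have hxt : x ≤ (t₂:ℝ) := by nlinarith
  have hmt : m ≤ t₂ := by
    have : (m:ℝ) ≤ (t₂:ℝ) := hmx.trans hxt
    exact_mod_cast this
  -- bound each term
  have hterm : ∀ j ∈ range (m+1),
      (t₂.choose j : ℝ) * q ^ j * (1-q) ^ (t₂ - j)
        ≤ x ^ m / (m.factorial : ℝ) * (1-q) ^ (t₂ - m) := by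
    intro j hj
    rw [Finset.mem_range, Nat.lt_succ_iff] at hj
    have h1 : (t₂.choose j : ℝ) * q ^ j ≤ x ^ j / (j.factorial : ℝ) := choose_mul_pow_le hq0
    have h2 : x ^ j / (j.factorial : ℝ) ≤ x ^ m / (m.factorial : ℝ) :=
      pow_div_fact_mono hx hj hmx
    have h3 : (1-q) ^ (t₂ - j) ≤ (1-q) ^ (t₂ - m) :=
      pow_le_pow_of_le_one (by linarith) (by linarith) (Nat.sub_le_sub_left hj t₂)
    have h4 : (0:ℝ) ≤ (1-q) ^ (t₂ - j) := pow_nonneg (by linarith) _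
    have h5 : (0:ℝ) ≤ x ^ m / (m.factorial : ℝ) := by positivity
    calc (t₂.choose j : ℝ) * q ^ j * (1-q) ^ (t₂ - j)
        ≤ x ^ m / (m.factorial : ℝ) * (1-q) ^ (t₂ - j) := by
          have := h1.trans h2
          nlinarith [mul_nonneg (Nat.cast_nonneg (t₂.choose j)) (pow_nonneg hq0 j)]
      _ ≤ x ^ m / (m.factorial : ℝ) * (1-q) ^ (t₂ - m) := by nlinarith
  have hsum : ∑ j ∈ range (m + 1), (t₂.choose j : ℝ) * q ^ j * (1-q) ^ (t₂ - j)
      ≤ ((m:ℝ) + 1) * (x ^ m / (m.factorial : ℝ) * (1-q) ^ (t₂ - m)) := by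
    calc ∑ j ∈ range (m + 1), (t₂.choose j : ℝ) * q ^ j * (1-q) ^ (t₂ - j)
        ≤ ∑ _j ∈ range (m + 1), x ^ m / (m.factorial : ℝ) * (1-q) ^ (t₂ - m) :=
          Finset.sum_le_sum hterm
      _ = ((m:ℝ) + 1) * (x ^ m / (m.factorial : ℝ) * (1-q) ^ (t₂ - m)) := by
          rw [Finset.sum_const, Finset.card_range, nsmul_eq_mul]; push_cast; ring
  -- now the three exponential bounds
  have hb1 : (m:ℝ) + 1 ≤ Real.exp m := Real.add_one_le_exp _
  have hb2 : x ^ m / (m.factorial : ℝ) ≤ Real.exp ((m:ℝ) * Real.log 2) * Real.exp (x/2) := by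
    have h := pow_div_fact_le hx (by norm_num : (0:ℝ) < 1/2) m
    rw [show (1/2:ℝ) * x = x/2 by ring] at h
    calc x ^ m / (m.factorial : ℝ) ≤ Real.exp (x/2) / (1/2:ℝ) ^ m := h
      _ = 2 ^ m * Real.exp (x/2) := by
          rw [one_div, inv_pow]; field_simp
      _ = Real.exp ((m:ℝ) * Real.log 2) * Real.exp (x/2) := by
          rw [pow_eq_exp (by norm_num : (0:ℝ) < 2) m]
  have hb3 : (1-q) ^ (t₂ - m) ≤ Real.exp ((m:ℝ) - x) := by
    have he : 1 - q ≤ Real.exp (-q) := by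
      have := Real.add_one_le_exp (-q); linarith
    calc (1-q) ^ (t₂ - m) ≤ Real.exp (-q) ^ (t₂ - m) :=
          pow_le_pow_left₀ (by linarith) he _
      _ = Real.exp (-q * ((t₂ - m : ℕ) : ℝ)) := by
          rw [← Real.exp_nat_mul]; ring_nf
      _ ≤ Real.exp ((m:ℝ) - x) := by
          rw [Real.exp_le_exp, Nat.cast_sub hmt]
          nlinarith
  have hlog2 : Real.log 2 ≤ 0.6932 := by
    have := Real.log_two_lt_d9; linarith
  have hfin : Real.exp ((m:ℝ)) * (Real.exp ((m:ℝ) * Real.log 2) * Real.exp (x/2))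
      * Real.exp ((m:ℝ) - x) ≤ Real.exp (-6 * L) := by
    rw [← Real.exp_add, ← Real.exp_add, ← Real.exp_add, Real.exp_le_exp]
    have hm0 : (0:ℝ) ≤ (m:ℝ) := Nat.cast_nonneg m
    have hlg0 : 0 ≤ Real.log 2 := Real.log_nonneg (by norm_num)
    nlinarith [mul_le_mul_of_nonneg_left hlog2 hm0]
  have hAll : ((m:ℝ) + 1) * (x ^ m / (m.factorial : ℝ) * (1-q) ^ (t₂ - m))
      ≤ Real.exp ((m:ℝ)) * (Real.exp ((m:ℝ) * Real.log 2) * Real.exp (x/2))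
        * Real.exp ((m:ℝ) - x) := by
    have h5 : (0:ℝ) ≤ x ^ m / (m.factorial : ℝ) := by positivity
    have h6 : (0:ℝ) ≤ (1-q) ^ (t₂ - m) := pow_nonneg (by linarith) _
    have h7 : (0:ℝ) ≤ (m:ℝ) + 1 := by positivity
    have h8 : (0:ℝ) < Real.exp ((m:ℝ) * Real.log 2) * Real.exp (x/2) := by positivity
    calc ((m:ℝ) + 1) * (x ^ m / (m.factorial : ℝ) * (1-q) ^ (t₂ - m))
        ≤ Real.exp ((m:ℝ)) * (Real.exp ((m:ℝ) * Real.log 2) * Real.exp (x/2)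
            * Real.exp ((m:ℝ) - x)) := by
          apply mul_le_mul hb1 ?_ (by positivity) (by positivity)
          exact mul_le_mul hb2 hb3 h6 (le_of_lt h8)
      _ = _ := by ring
  linarith

lemma hLbound {n : ℕ} (hn : 2 ≤ n) : (0.693:ℝ) ≤ Real.log n := by
  have h2 : (0.6931471803 : ℝ) < Real.log 2 := Real.log_two_gt_d9
  have : Real.log 2 ≤ Real.log n := by
    apply Real.log_le_log (by norm_num)
    exact_mod_cast hn
  linarith

lemma per_letter {n t₁ t₂ : ℕ} (hn : 2 ≤ n) (κ : Measure (Fin n)) [IsProbabilityMeasure κ]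
    (i : Fin n) (q : ℝ) (hq0 : 0 ≤ q) (hq1 : q ≤ 1) (hκ : κ {i} = ENNReal.ofReal q)
    (ht₁ : 1 ≤ t₁) (ht₁₂ : t₁ ≤ t₂) :
    ((Measure.pi fun _ : Fin t₁ => κ).prod (Measure.pi fun _ : Fin t₂ => κ))
      {ω : (Fin t₁ → Fin n) × (Fin t₂ → Fin n) |
        ¬ ((Finset.univ.filter fun s => ω.1 s = i).card : ℝ) ≤
            300 * Real.log n *
              max 1 (((t₁:ℝ)/(t₂:ℝ)) * ((Finset.univ.filter fun s => ω.2 s = i).card : ℝ))}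
      ≤ ENNReal.ofReal (2 * Real.exp (-6 * Real.log n)) := by
  set L := Real.log n with hLdef
  have hL : (0.693:ℝ) ≤ L := hLbound hn
  set ν₁ := Measure.pi fun _ : Fin t₁ => κ with hν₁
  set ν₂ := Measure.pi fun _ : Fin t₂ => κ with hν₂
  have hofReal : ∀ (t k : ℕ), ((t.choose k : ℝ≥0∞) * κ {i} ^ k)
      = ENNReal.ofReal ((t.choose k : ℝ) * q ^ k) := by
    intro t k
    rw [hκ, ENNReal.ofReal_mul (Nat.cast_nonneg _), ENNReal.ofReal_pow hq0,
      ENNReal.ofReal_natCast]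
  by_cases hc : (t₁:ℝ) * q ≤ 18 * L
  · -- Case A
    set k := ⌈(80:ℝ) * L⌉₊ with hkdef
    have hsub : {ω : (Fin t₁ → Fin n) × (Fin t₂ → Fin n) |
        ¬ ((Finset.univ.filter fun s => ω.1 s = i).card : ℝ) ≤
            300 * L * max 1 (((t₁:ℝ)/(t₂:ℝ)) *
              ((Finset.univ.filter fun s => ω.2 s = i).card : ℝ))}
        ⊆ {ω₁ : Fin t₁ → Fin n | k ≤ (Finset.univ.filter fun s => ω₁ s = i).card} ×ˢ
            Set.univ := by
      intro ω hω
      simp only [Set.mem_setOf_eq] at hω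
      constructor
      swap
      · trivial
      simp only [Set.mem_setOf_eq]
      by_contra hk
      push_neg at hk
      apply hω
      have hXk : ((Finset.univ.filter fun s => ω.1 s = i).card : ℝ) + 1 ≤ (k:ℝ) := by
        exact_mod_cast hk
      have hkb : (k:ℝ) < 80 * L + 1 := Nat.ceil_lt_add_one (by positivity)
      have hX : ((Finset.univ.filter fun s => ω.1 s = i).card : ℝ) ≤ 300 * L := by linarith
      calc ((Finset.univ.filter fun s => ω.1 s = i).card : ℝ) ≤ 300 * L := hX
        _ ≤ 300 * L * max 1 (((t₁:ℝ)/(t₂:ℝ)) *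
              ((Finset.univ.filter fun s => ω.2 s = i).card : ℝ)) := by
          exact le_mul_of_one_le_right (by positivity) (le_max_left _ _)
    refine le_trans (measure_mono hsub) ?_
    rw [Measure.prod_prod, measure_univ, mul_one]
    refine le_trans (tail_upper κ i k) ?_
    rw [hofReal]
    apply ENNReal.ofReal_le_ofReal
    have := caseA (t₁ := t₁) hq0 hL hc
    nlinarith [Real.exp_pos (-6 * L)]
  · -- Case B
    push_neg at hc
    have ht₂pos : (0:ℝ) < (t₂:ℝ) := by
      have : (1:ℕ) ≤ t₂ := ht₁.trans ht₁₂
      exact_mod_cast Nat.lt_of_lt_of_le Nat.zero_lt_one this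
    have hx₁pos : (0:ℝ) < (t₁:ℝ) * q := lt_trans (by positivity) hc
    set k := ⌈(8:ℝ) * ((t₁:ℝ) * q)⌉₊ with hkdef
    set m := ⌊(t₂:ℝ) * q / 20⌋₊ with hmdef
    set TB := {ω₁ : Fin t₁ → Fin n | k ≤ (Finset.univ.filter fun s => ω₁ s = i).card}
      with hTBdef
    set BB := {ω₂ : Fin t₂ → Fin n | (Finset.univ.filter fun s => ω₂ s = i).card ≤ m}
      with hBBdef
    have hsub : {ω : (Fin t₁ → Fin n) × (Fin t₂ → Fin n) |
        ¬ ((Finset.univ.filter fun s => ω.1 s = i).card : ℝ) ≤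
            300 * L * max 1 (((t₁:ℝ)/(t₂:ℝ)) *
              ((Finset.univ.filter fun s => ω.2 s = i).card : ℝ))}
        ⊆ (TB ×ˢ Set.univ) ∪ (Set.univ ×ˢ BB) := by
      intro ω hω
      simp only [Set.mem_setOf_eq] at hω
      by_contra hmem
      simp only [Set.mem_union, Set.mem_prod, Set.mem_univ, and_true, true_and,
        hTBdef, hBBdef, Set.mem_setOf_eq, not_or, not_le] at hmem
      obtain ⟨hX, hY⟩ := hmem
      apply hω
      set X := ((Finset.univ.filter fun s => ω.1 s = i).card : ℝ) with hXdef
      set Y := ((Finset.univ.filter fun s => ω.2 s = i).card : ℝ) with hYdef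
      have hXk : X + 1 ≤ (k:ℝ) := by rw [hXdef]; exact_mod_cast Nat.succ_le_of_lt hX
      have hkb : (k:ℝ) < 8 * ((t₁:ℝ) * q) + 1 := Nat.ceil_lt_add_one (by positivity)
      have hX9 : X ≤ 8 * ((t₁:ℝ) * q) := by linarith
      have hYm : (m:ℝ) + 1 ≤ Y := by rw [hYdef]; exact_mod_cast Nat.succ_le_of_lt hY
      have hmY : (t₂:ℝ) * q / 20 < Y := by
        have := Nat.lt_floor_add_one ((t₂:ℝ) * q / 20)
        linarith
      have hz : (t₁:ℝ) * q / 20 < ((t₁:ℝ)/(t₂:ℝ)) * Y := by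
        have h1 : ((t₁:ℝ)/(t₂:ℝ)) * ((t₂:ℝ) * q / 20) = (t₁:ℝ) * q / 20 := by
          field_simp
        rw [← h1]
        apply mul_lt_mul_of_pos_left hmY
        have ht₁pos : (0:ℝ) < (t₁:ℝ) := by exact_mod_cast ht₁
        positivity
      have hmax : (t₁:ℝ) * q / 20 ≤ max 1 (((t₁:ℝ)/(t₂:ℝ)) * Y) :=
        le_trans (le_of_lt hz) (le_max_right _ _)
      have hmax1 : (1:ℝ) ≤ max 1 (((t₁:ℝ)/(t₂:ℝ)) * Y) := le_max_left _ _
      have h160 : X ≤ 160 * max 1 (((t₁:ℝ)/(t₂:ℝ)) * Y) := by linarith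
      have h300 : 160 * max 1 (((t₁:ℝ)/(t₂:ℝ)) * Y)
          ≤ 300 * L * max 1 (((t₁:ℝ)/(t₂:ℝ)) * Y) := by
        have hmax0 : (0:ℝ) ≤ max 1 (((t₁:ℝ)/(t₂:ℝ)) * Y) := by linarith
        nlinarith
      linarith
    have hTBbound : ν₁ TB ≤ ENNReal.ofReal (Real.exp (-6 * L)) := by
      calc ν₁ TB ≤ (t₁.choose k : ℝ≥0∞) * κ {i} ^ k := tail_upper κ i k
        _ ≤ ENNReal.ofReal (Real.exp (-6 * L)) := by
            rw [hofReal]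
            exact ENNReal.ofReal_le_ofReal (caseB1 hq0 hL hc)
    have h1mq : (1:ℝ≥0∞) - ENNReal.ofReal q = ENNReal.ofReal (1 - q) := by
      rw [ENNReal.ofReal_sub 1 hq0, ENNReal.ofReal_one]
    have hBBbound : ν₂ BB ≤ ENNReal.ofReal (Real.exp (-6 * L)) := by
      calc ν₂ BB ≤ ∑ j ∈ Finset.range (m + 1),
            (t₂.choose j : ℝ≥0∞) * κ {i} ^ j * (1 - κ {i}) ^ (t₂ - j) := tail_lower κ i m
        _ = ENNReal.ofReal (∑ j ∈ Finset.range (m + 1),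
              (t₂.choose j : ℝ) * q ^ j * (1 - q) ^ (t₂ - j)) := by
            rw [ENNReal.ofReal_sum_of_nonneg]
            · refine Finset.sum_congr rfl fun j _ => ?_
              rw [hκ, h1mq, ENNReal.ofReal_mul (by positivity),
                ENNReal.ofReal_mul (Nat.cast_nonneg _), ENNReal.ofReal_pow hq0,
                ENNReal.ofReal_pow (by linarith), ENNReal.ofReal_natCast]
            · intro j _
              have : (0:ℝ) ≤ (1 - q) ^ (t₂ - j) := pow_nonneg (by linarith) _
              positivity
        _ ≤ ENNReal.ofReal (Real.exp (-6 * L)) :=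
            ENNReal.ofReal_le_ofReal (caseB2 hq0 hq1 hL (lt_of_lt_of_le hc
              (mul_le_mul_of_nonneg_right (by exact_mod_cast ht₁₂) hq0)))
    refine le_trans (measure_mono hsub) (le_trans (measure_union_le _ _) ?_)
    simp only [Measure.prod_prod, measure_univ, mul_one, one_mul]
    refine le_trans (add_le_add hTBbound hBBbound) (le_of_eq ?_)
    rw [← ENNReal.ofReal_add (Real.exp_pos _).le (Real.exp_pos _).le]
    congr 1
    ring


/-- Lemma 5.2 (lm_sampledist): there is an absolute constant `C > 0` such that for any
probability vector `p` on `Fin n` (`n ≥ 2`) and sample sizes `1 ≤ t₁ ≤ t₂`, with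
probability at least `9/10` over independent samples `ω ~ p^{t₁}` and `ω' ~ p^{t₂}`,
every letter `i` satisfies `X i ≤ C · log n · max 1 ((t₁/t₂) · Y i)`, where `X i, Y i`
are the occurrence counts of `i` in `ω, ω'`. -/
theorem sample_dist_occurrence_bound :
    ∃ C : ℝ, 0 < C ∧
      ∀ (n : ℕ), 2 ≤ n → ∀ (p : Fin n → ℝ) (hp0 : ∀ i, 0 ≤ p i) (hp1 : ∑ i, p i = 1)
        (t₁ t₂ : ℕ), 1 ≤ t₁ → t₁ ≤ t₂ →
        (9 / 10 : ENNReal) ≤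
          ((Measure.pi fun _ : Fin t₁ => (pmfOfVec p hp0 hp1).toMeasure).prod
            (Measure.pi fun _ : Fin t₂ => (pmfOfVec p hp0 hp1).toMeasure))
            {ω : (Fin t₁ → Fin n) × (Fin t₂ → Fin n) |
              ∀ i : Fin n,
                ((Finset.univ.filter fun s => ω.1 s = i).card : ℝ) ≤
                  C * Real.log n *
                    max 1 (((t₁ : ℝ) / (t₂ : ℝ)) *
                      ((Finset.univ.filter fun s => ω.2 s = i).card : ℝ))} := by
  refine ⟨300, by norm_num, ?_⟩
  intro n hn p hp0 hp1 t₁ t₂ ht₁ ht₁₂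
  set κ := (pmfOfVec p hp0 hp1).toMeasure with hκdef
  set μ := (Measure.pi fun _ : Fin t₁ => κ).prod (Measure.pi fun _ : Fin t₂ => κ) with hμdef
  haveI : IsProbabilityMeasure μ := by infer_instance
  set G := {ω : (Fin t₁ → Fin n) × (Fin t₂ → Fin n) |
      ∀ i : Fin n,
        ((Finset.univ.filter fun s => ω.1 s = i).card : ℝ) ≤
          300 * Real.log n *
            max 1 (((t₁ : ℝ) / (t₂ : ℝ)) *
              ((Finset.univ.filter fun s => ω.2 s = i).card : ℝ))} with hGdef
  have hGm : MeasurableSet G := MeasurableSet.of_discrete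
  have hκ_single : ∀ i : Fin n, κ {i} = ENNReal.ofReal (p i) := by
    intro i
    rw [hκdef, PMF.toMeasure_apply_singleton _ _ (measurableSet_singleton i)]
    simp [pmfOfVec]
  have hq1 : ∀ i, p i ≤ 1 := by
    intro i
    rw [← hp1]
    exact Finset.single_le_sum (fun j _ => hp0 j) (Finset.mem_univ i)
  have hnpos : (0:ℝ) < (n:ℝ) := by
    have : (0:ℕ) < n := by omega
    exact_mod_cast this
  set bad : Fin n → Set ((Fin t₁ → Fin n) × (Fin t₂ → Fin n)) := fun i =>
      {ω : (Fin t₁ → Fin n) × (Fin t₂ → Fin n) |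
        ¬ ((Finset.univ.filter fun s => ω.1 s = i).card : ℝ) ≤
            300 * Real.log n *
              max 1 (((t₁ : ℝ) / (t₂ : ℝ)) *
                ((Finset.univ.filter fun s => ω.2 s = i).card : ℝ))} with hbaddef
  have hbadsub : Gᶜ ⊆ ⋃ i : Fin n, bad i := by
    intro ω hω
    simp only [hGdef, Set.mem_compl_iff, Set.mem_setOf_eq, not_forall] at hω
    obtain ⟨i, hi⟩ := hω
    exact Set.mem_iUnion.mpr ⟨i, hi⟩
  have hbad : μ Gᶜ ≤ (n : ℝ≥0∞) * ENNReal.ofReal (2 * Real.exp (-6 * Real.log n)) := by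
    have h1 : μ Gᶜ ≤ ∑' i : Fin n, μ (bad i) :=
      (measure_mono hbadsub).trans (measure_iUnion_le _)
    have h2 : ∑' i : Fin n, μ (bad i)
        ≤ ∑' _i : Fin n, ENNReal.ofReal (2 * Real.exp (-6 * Real.log n)) := by
      apply ENNReal.tsum_le_tsum
      intro i
      exact per_letter hn κ i (p i) (hp0 i) (hq1 i) (hκ_single i) ht₁ ht₁₂
    have h3 : ∑' _i : Fin n, ENNReal.ofReal (2 * Real.exp (-6 * Real.log n))
        = (n : ℝ≥0∞) * ENNReal.ofReal (2 * Real.exp (-6 * Real.log n)) := by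
      rw [tsum_fintype, Finset.sum_const, Finset.card_univ, Fintype.card_fin,
        nsmul_eq_mul]
    exact h1.trans (h2.trans_eq h3)
  have hreal : (n:ℝ) * (2 * Real.exp (-6 * Real.log n)) ≤ 1/10 := by
    have hexp : Real.exp (-6 * Real.log n) = ((n:ℝ)^(6:ℕ))⁻¹ := by
      rw [show (-6 : ℝ) * Real.log n = -(((6:ℕ):ℝ) * Real.log n) by push_cast; ring,
        Real.exp_neg, Real.exp_nat_mul, Real.exp_log hnpos]
    rw [hexp]
    have h2n : (2:ℝ) ≤ (n:ℝ) := by exact_mod_cast hn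
    have h5 : (32:ℝ) ≤ (n:ℝ)^(5:ℕ) := by
      calc (32:ℝ) = 2^(5:ℕ) := by norm_num
        _ ≤ (n:ℝ)^(5:ℕ) := by gcongr
    have hne : ((n:ℝ)^(6:ℕ)) = (n:ℝ) * (n:ℝ)^(5:ℕ) := by ring
    have h5pos : (0:ℝ) < (n:ℝ)^(5:ℕ) := by positivity
    have heqn : (n:ℝ) * (2 * ((n:ℝ)^(6:ℕ))⁻¹) = 2 / (n:ℝ)^(5:ℕ) := by
      rw [hne]; field_simp
    rw [heqn, div_le_div_iff₀ h5pos (by norm_num)]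
    linarith
  have hbad10 : μ Gᶜ ≤ 1/10 := by
    refine hbad.trans ?_
    rw [← ENNReal.ofReal_natCast n, ← ENNReal.ofReal_mul (Nat.cast_nonneg n)]
    calc ENNReal.ofReal ((n:ℝ) * (2 * Real.exp (-6 * Real.log n)))
        ≤ ENNReal.ofReal (1/10) := ENNReal.ofReal_le_ofReal hreal
      _ = 1/10 := by
          rw [ENNReal.ofReal_div_of_pos (by norm_num), ENNReal.ofReal_one,
            ENNReal.ofReal_ofNat]
  have hG : μ G = 1 - μ Gᶜ := by
    have h := prob_compl_eq_one_sub (μ := μ) hGm.compl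
    rwa [compl_compl] at h
  rw [hG]
  have h910 : (1:ℝ≥0∞) - 1/10 = 9/10 := by
    apply ENNReal.sub_eq_of_eq_add (by norm_num)
    rw [ENNReal.div_add_div_same]
    rw [show (9:ℝ≥0∞)+1 = 10 by norm_num]
    rw [ENNReal.div_self (by norm_num) (by norm_num)]
  calc (9/10 : ℝ≥0∞) = 1 - 1/10 := h910.symm
    _ ≤ 1 - μ Gᶜ := tsub_le_tsub_left hbad10 1
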